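/- Let G_0 be the 8-vertex graph on {a_1,…,a_4,b_1,…,b_4} in which a_1,…,a_4 induce a complete graph K_4, b_1,…,b_4 induce the 4-cycle b_1b_2b_3b_4, and a_i is adjacent to b_i for each i; let H_0 be the triangular prism (two triangles a_1a_2a_3 and b_1b_2b_3 together with the matching edges a_ib_i). Let G* be obtained from the disjoint union of two copies of G_0 by adding one new vertex adjacent to all other vertices, and H* be obtained from the disjoint union of two copies of H_0 by adding one new vertex adjacent to all other vertices. Then in each of the graphs G* and H*, every pair (u,v) of distinct non-apex vertices has the extension property: there exist four vertices z_1, z_2, z_3, z_4, each distinct from u and v, such that z_1 is adjacent to neither u nor v; z_2 is adjacent to u but not to v; z_3 is adjacent to v but not to u; and z_4 is adjacent to both u and v. -/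

import Mathlib

/-- Add an apex vertex (`none`) adjacent to all vertices of `G`. -/
def addApex {α : Type*} (G : SimpleGraph α) : SimpleGraph (Option α) where
  Adj u v := match u, v with
    | none, none => False
    | none, some _ => True
    | some _, none => True
    | some a, some b => G.Adj a b
  symm := by
    constructor
    rintro (_ | a) (_ | b) h
    · exact h
    · exact trivial
    · exact trivial
    · exact G.adj_symm h
  loopless := by
    constructor
    rintro (_ | a) h
    · exact h
    · exact G.loopless.irrefl a h

/-- `G₀`: 8-vertex graph in which the `inl` vertices `a₁,…,a₄` induce a complete graph
`K₄`, the `inr` vertices `b₁,…,b₄` induce the 4-cycle `b₁b₂b₃b₄`, and `aᵢ ~ bᵢ`. -/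
def G₀ : SimpleGraph (Fin 4 ⊕ Fin 4) where
  Adj u v := match u, v with
    | .inl a, .inl b => a ≠ b
    | .inl a, .inr b => a = b
    | .inr a, .inl b => a = b
    | .inr a, .inr b => (SimpleGraph.cycleGraph 4).Adj a b
  symm := by
    constructor
    rintro (a | a) (b | b) h
    · exact h.symm
    · exact h.symm
    · exact h.symm
    · exact (SimpleGraph.cycleGraph 4).adj_symm h
  loopless := by
    constructor
    rintro (a | a) h
    · exact h rfl
    · exact (SimpleGraph.cycleGraph 4).loopless.irrefl a h

/-- `H₀`: the triangular prism, two triangles `a₁a₂a₃` (the `inl` vertices) and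
`b₁b₂b₃` (the `inr` vertices) together with the matching edges `aᵢbᵢ`. -/
def H₀ : SimpleGraph (Fin 3 ⊕ Fin 3) where
  Adj u v := match u, v with
    | .inl a, .inl b => a ≠ b
    | .inl a, .inr b => a = b
    | .inr a, .inl b => a = b
    | .inr a, .inr b => a ≠ b
  symm := by constructor; rintro (a | a) (b | b) h <;> exact h.symm
  loopless := by constructor; rintro (a | a) h <;> exact h rfl

/-- `G*`: the disjoint union of two copies of `G₀` with an added apex vertex
adjacent to everything. -/
def Gstar : SimpleGraph (Option ((Fin 4 ⊕ Fin 4) ⊕ (Fin 4 ⊕ Fin 4))) :=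
  addApex (G₀ ⊕g G₀)

/-- `H*`: the disjoint union of two copies of `H₀` with an added apex vertex
adjacent to everything. -/
def Hstar : SimpleGraph (Option ((Fin 3 ⊕ Fin 3) ⊕ (Fin 3 ⊕ Fin 3))) :=
  addApex (H₀ ⊕g H₀)

instance {α β : Type*} (G : SimpleGraph α) (H : SimpleGraph β) [DecidableRel G.Adj]
    [DecidableRel H.Adj] : DecidableRel (G ⊕g H).Adj
  | .inl a, .inl b => inferInstanceAs (Decidable (G.Adj a b))
  | .inl _, .inr _ => inferInstanceAs (Decidable (false = true))
  | .inr _, .inl _ => inferInstanceAs (Decidable (false = true))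
  | .inr a, .inr b => inferInstanceAs (Decidable (H.Adj a b))

instance {α : Type*} (G : SimpleGraph α) [DecidableRel G.Adj] :
    DecidableRel (addApex G).Adj
  | none, none => inferInstanceAs (Decidable False)
  | none, some _ => inferInstanceAs (Decidable True)
  | some _, none => inferInstanceAs (Decidable True)
  | some a, some b => inferInstanceAs (Decidable (G.Adj a b))

instance : DecidableRel G₀.Adj
  | .inl a, .inl b => inferInstanceAs (Decidable (a ≠ b))
  | .inl a, .inr b => inferInstanceAs (Decidable (a = b))
  | .inr a, .inl b => inferInstanceAs (Decidable (a = b))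
  | .inr a, .inr b => inferInstanceAs (Decidable ((SimpleGraph.cycleGraph 4).Adj a b))

instance : DecidableRel H₀.Adj
  | .inl a, .inl b => inferInstanceAs (Decidable (a ≠ b))
  | .inl a, .inr b => inferInstanceAs (Decidable (a = b))
  | .inr a, .inl b => inferInstanceAs (Decidable (a = b))
  | .inr a, .inr b => inferInstanceAs (Decidable (a ≠ b))

instance : DecidableRel Gstar.Adj := inferInstanceAs (DecidableRel (addApex (G₀ ⊕g G₀)).Adj)
instance : DecidableRel Hstar.Adj := inferInstanceAs (DecidableRel (addApex (H₀ ⊕g H₀)).Adj)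

set_option synthInstance.maxSize 10000 in
set_option maxHeartbeats 1000000 in
private lemma auxG : ∀ u v : (Fin 4 ⊕ Fin 4) ⊕ (Fin 4 ⊕ Fin 4), u ≠ v →
      (∃ z : Option ((Fin 4 ⊕ Fin 4) ⊕ (Fin 4 ⊕ Fin 4)),
        z ≠ some u ∧ z ≠ some v ∧ ¬Gstar.Adj z (some u) ∧ ¬Gstar.Adj z (some v)) ∧
      (∃ z : Option ((Fin 4 ⊕ Fin 4) ⊕ (Fin 4 ⊕ Fin 4)),
        z ≠ some u ∧ z ≠ some v ∧ Gstar.Adj z (some u) ∧ ¬Gstar.Adj z (some v)) ∧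
      (∃ z : Option ((Fin 4 ⊕ Fin 4) ⊕ (Fin 4 ⊕ Fin 4)),
        z ≠ some u ∧ z ≠ some v ∧ ¬Gstar.Adj z (some u) ∧ Gstar.Adj z (some v)) ∧
      (∃ z : Option ((Fin 4 ⊕ Fin 4) ⊕ (Fin 4 ⊕ Fin 4)),
        z ≠ some u ∧ z ≠ some v ∧ Gstar.Adj z (some u) ∧ Gstar.Adj z (some v)) := by decide

set_option synthInstance.maxSize 10000 in
set_option maxHeartbeats 1000000 in
private lemma auxH : ∀ u v : (Fin 3 ⊕ Fin 3) ⊕ (Fin 3 ⊕ Fin 3), u ≠ v →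
      (∃ z : Option ((Fin 3 ⊕ Fin 3) ⊕ (Fin 3 ⊕ Fin 3)),
        z ≠ some u ∧ z ≠ some v ∧ ¬Hstar.Adj z (some u) ∧ ¬Hstar.Adj z (some v)) ∧
      (∃ z : Option ((Fin 3 ⊕ Fin 3) ⊕ (Fin 3 ⊕ Fin 3)),
        z ≠ some u ∧ z ≠ some v ∧ Hstar.Adj z (some u) ∧ ¬Hstar.Adj z (some v)) ∧
      (∃ z : Option ((Fin 3 ⊕ Fin 3) ⊕ (Fin 3 ⊕ Fin 3)),
        z ≠ some u ∧ z ≠ some v ∧ ¬Hstar.Adj z (some u) ∧ Hstar.Adj z (some v)) ∧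
      (∃ z : Option ((Fin 3 ⊕ Fin 3) ⊕ (Fin 3 ⊕ Fin 3)),
        z ≠ some u ∧ z ≠ some v ∧ Hstar.Adj z (some u) ∧ Hstar.Adj z (some v)) := by decide

/-- in each of `G*` and `H*`, every pair of distinct non-apex vertices
`(u, v)` has the extension property: there are four vertices `z₁, z₂, z₃, z₄`, each
distinct from `u` and `v`, with `z₁` adjacent to neither, `z₂` adjacent to `u` only,
`z₃` adjacent to `v` only, and `z₄` adjacent to both. -/
theorem apex_graphs_extension_property :
    (∀ u v : (Fin 4 ⊕ Fin 4) ⊕ (Fin 4 ⊕ Fin 4), u ≠ v →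
      ∃ z₁ z₂ z₃ z₄ : Option ((Fin 4 ⊕ Fin 4) ⊕ (Fin 4 ⊕ Fin 4)),
        (z₁ ≠ some u ∧ z₁ ≠ some v ∧ ¬Gstar.Adj z₁ (some u) ∧ ¬Gstar.Adj z₁ (some v)) ∧
        (z₂ ≠ some u ∧ z₂ ≠ some v ∧ Gstar.Adj z₂ (some u) ∧ ¬Gstar.Adj z₂ (some v)) ∧
        (z₃ ≠ some u ∧ z₃ ≠ some v ∧ ¬Gstar.Adj z₃ (some u) ∧ Gstar.Adj z₃ (some v)) ∧
        (z₄ ≠ some u ∧ z₄ ≠ some v ∧ Gstar.Adj z₄ (some u) ∧ Gstar.Adj z₄ (some v))) ∧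
    (∀ u v : (Fin 3 ⊕ Fin 3) ⊕ (Fin 3 ⊕ Fin 3), u ≠ v →
      ∃ z₁ z₂ z₃ z₄ : Option ((Fin 3 ⊕ Fin 3) ⊕ (Fin 3 ⊕ Fin 3)),
        (z₁ ≠ some u ∧ z₁ ≠ some v ∧ ¬Hstar.Adj z₁ (some u) ∧ ¬Hstar.Adj z₁ (some v)) ∧
        (z₂ ≠ some u ∧ z₂ ≠ some v ∧ Hstar.Adj z₂ (some u) ∧ ¬Hstar.Adj z₂ (some v)) ∧
        (z₃ ≠ some u ∧ z₃ ≠ some v ∧ ¬Hstar.Adj z₃ (some u) ∧ Hstar.Adj z₃ (some v)) ∧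
        (z₄ ≠ some u ∧ z₄ ≠ some v ∧ Hstar.Adj z₄ (some u) ∧ Hstar.Adj z₄ (some v))) := by
  constructor
  · intro u v huv
    obtain ⟨⟨z₁, h₁⟩, ⟨z₂, h₂⟩, ⟨z₃, h₃⟩, ⟨z₄, h₄⟩⟩ := auxG u v huv
    exact ⟨z₁, z₂, z₃, z₄, h₁, h₂, h₃, h₄⟩
  · intro u v huv
    obtain ⟨⟨z₁, h₁⟩, ⟨z₂, h₂⟩, ⟨z₃, h₃⟩, ⟨z₄, h₄⟩⟩ := auxH u v huv
    exact ⟨z₁, z₂, z₃, z₄, h₁, h₂, h₃, h₄⟩
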